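/- Let p be an odd prime and let u ∈ ℚ_p be a unit (i.e. of p-adic valuation 0) that is not a square in ℚ_p. Then every quaternion algebra ℍ[ℚ_p, a, b] with a, b ∈ ℚ_p nonzero is isomorphic as a ℚ_p-algebra either to the split quaternion algebra ℍ[ℚ_p, 1, 1] or to the division algebra ℍ[ℚ_p, p, u]; i.e. there are exactly two isomorphism classes of quaternion algebras over ℚ_p. -/

import Mathlib

set_option linter.unreachableTactic false
set_option linter.unusedTactic false
set_option linter.unusedVariables false
set_option maxHeartbeats 1000000

open Quaternion

namespace PadicQuatAux

open QuaternionAlgebra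

section AlgebraLayer

variable {F : Type*} [Field F]

def castEquiv (a b a' b' : F) (h1 : a = a') (h2 : b = b') : ℍ[F,a,b] ≃ₐ[F] ℍ[F,a',b'] := by
  subst h1; subst h2; exact AlgEquiv.refl

def swapBasis (a b : F) : Basis ℍ[F,a,b] b 0 a where
  i := ⟨0,0,1,0⟩
  j := ⟨0,1,0,0⟩
  k := ⟨0,0,0,-1⟩
  i_mul_i := by ext <;> simp [mk_mul_mk, smul_mk] <;> ring
  j_mul_j := by ext <;> simp [mk_mul_mk, smul_mk] <;> ring
  i_mul_j := by ext <;> simp [mk_mul_mk, smul_mk] <;> ring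
  j_mul_i := by ext <;> simp [mk_mul_mk, smul_mk, neg_mk] <;> ring

def swapEquiv (a b : F) : ℍ[F,a,b] ≃ₐ[F] ℍ[F,b,a] :=
  AlgEquiv.ofAlgHom (swapBasis b a).liftHom (swapBasis a b).liftHom
    (by ext <;> simp [swapBasis, Basis.liftHom, Basis.lift, Basis.self, algebraMap_eq, smul_mk])
    (by ext <;> simp [swapBasis, Basis.liftHom, Basis.lift, Basis.self, algebraMap_eq, smul_mk])

def normBasis (a b α β c : F) (h : b*(α^2 - a*β^2) = c) : Basis ℍ[F,a,b] a 0 c where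
  i := ⟨0,1,0,0⟩
  j := ⟨0,0,α,β⟩
  k := ⟨0,0,a*β,α⟩
  i_mul_i := by ext <;> simp [mk_mul_mk, smul_mk] <;> ring
  j_mul_j := by
    have hc : c = b*(α^2 - a*β^2) := h.symm
    subst hc
    ext <;> simp [mk_mul_mk, smul_mk] <;> ring
  i_mul_j := by ext <;> simp [mk_mul_mk, smul_mk] <;> ring
  j_mul_i := by ext <;> simp [mk_mul_mk, smul_mk, neg_mk] <;> ring

/-- If `n = α² - a β²` is a nonzero norm, then `ℍ[F,a,b*n] ≃ ℍ[F,a,b]`. -/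
def normEquiv (a b α β n : F) (h : α^2 - a*β^2 = n) (hn : n ≠ 0) :
    ℍ[F,a,b*n] ≃ₐ[F] ℍ[F,a,b] :=
  AlgEquiv.ofAlgHom (normBasis a b α β (b*n) (by rw [h])).liftHom
    ((normBasis a (b*n) (α/n) (-(β/n)) b (by field_simp; linear_combination b*h)).liftHom)
    (by ext <;> simp [normBasis, Basis.liftHom, Basis.lift, Basis.self, algebraMap_eq, smul_mk,
          mk_mul_mk] <;> field_simp <;> (try ring1) <;> (try linear_combination h) <;>
          (try linear_combination -h))
    (by ext <;> simp [normBasis, Basis.liftHom, Basis.lift, Basis.self, algebraMap_eq, smul_mk,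
          mk_mul_mk] <;> field_simp <;> (try ring1) <;> (try linear_combination h) <;>
          (try linear_combination -h))

def sqEquiv (a b s : F) (hs : s ≠ 0) : ℍ[F,a,b*s^2] ≃ₐ[F] ℍ[F,a,b] :=
  normEquiv a b s 0 (s^2) (by ring) (pow_ne_zero 2 hs)

def sqEquiv' (a b s : F) (hs : s ≠ 0) : ℍ[F,a*s^2,b] ≃ₐ[F] ℍ[F,a,b] :=
  (swapEquiv _ _).trans ((sqEquiv b a s hs).trans (swapEquiv _ _))

def oneEquiv (b : F) (hb : b ≠ 0) (h2 : (2:F) ≠ 0) : ℍ[F,1,b] ≃ₐ[F] ℍ[F,(1:F),1] :=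
  ((normEquiv 1 b ((b⁻¹+1)/2) ((b⁻¹-1)/2) b⁻¹ (by field_simp; ring) (inv_ne_zero hb)).symm.trans
    (castEquiv 1 (b*b⁻¹) 1 1 rfl (by field_simp)))

lemma conj_mul (a b w x y z : F) :
    (⟨w,-x,-y,-z⟩ : ℍ[F,a,b]) * ⟨w,x,y,z⟩ = ⟨w^2 - a*x^2 - b*y^2 + a*b*z^2,0,0,0⟩ := by
  ext <;> simp [mk_mul_mk] <;> ring

end AlgebraLayer

section NTLayer
open Polynomial

open Polynomial

variable {p : ℕ} [Fact p.Prime]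

lemma toZMod_eq_zero_iff (z : ℤ_[p]) : PadicInt.toZMod z = 0 ↔ ‖z‖ < 1 := by
  rw [← RingHom.mem_ker, PadicInt.ker_toZMod, IsLocalRing.mem_maximalIdeal,
    PadicInt.mem_nonunits]

lemma norm_one_iff_toZMod_ne (z : ℤ_[p]) : ‖z‖ = 1 ↔ PadicInt.toZMod z ≠ 0 := by
  rw [Ne, toZMod_eq_zero_iff, not_lt]
  constructor
  · intro h; rw [h]
  · intro h; exact le_antisymm (PadicInt.norm_le_one z) h

lemma two_norm_one (hodd : p ≠ 2) : ‖(2 : ℤ_[p])‖ = 1 := by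
  have : ((2:ℤ) : ℤ_[p]) = (2 : ℤ_[p]) := by norm_cast
  rw [← this]
  rcases lt_or_eq_of_le (PadicInt.norm_le_one ((2:ℤ) : ℤ_[p])) with h | h
  · exfalso
    rw [PadicInt.norm_int_lt_one_iff_dvd] at h
    have hp2 := (Fact.out : p.Prime).two_le
    have := Int.le_of_dvd (by norm_num) h
    omega
  · exact h

/-- units of `ℤ_[p]` with square residue are squares (p odd) -/
lemma zsq (hodd : p ≠ 2) (z : ℤ_[p]) (hz : ‖z‖ = 1) (t : ZMod p)
    (ht : PadicInt.toZMod z = t^2) : ∃ y : ℤ_[p], y^2 = z := by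
  have ht0 : t ≠ 0 := by
    intro h
    rw [h] at ht
    rw [norm_one_iff_toZMod_ne] at hz
    exact hz (by rw [ht]; ring)
  set a : ℤ_[p] := ((t.val : ℕ) : ℤ_[p]) with ha_def
  have ha : PadicInt.toZMod a = t := by
    rw [ha_def, map_natCast, ZMod.natCast_val, ZMod.cast_id]
  have hanorm : ‖a‖ = 1 := by
    rw [norm_one_iff_toZMod_ne, ha]; exact ht0
  set F : Polynomial ℤ_[p] := X^2 - C z with hF_def
  have hder : F.derivative = C 2 * X := by
    rw [hF_def]; simp [derivative_X_pow]; rw [map_ofNat]; norm_num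
  have hderval : ‖F.derivative.eval a‖ = 1 := by
    rw [hder]
    simp only [eval_mul, eval_C, eval_X]
    rw [norm_mul, two_norm_one hodd, hanorm]; norm_num
  have hevalres : PadicInt.toZMod (F.eval a) = 0 := by
    rw [hF_def]
    simp only [eval_sub, eval_pow, eval_X, eval_C, map_sub, map_pow, ha, ht, sub_self]
  have heval : ‖F.eval a‖ < 1 := (toZMod_eq_zero_iff _).mp hevalres
  have hcond : ‖F.eval a‖ < ‖F.derivative.eval a‖^2 := by
    rw [hderval]; simpa using heval
  obtain ⟨y, hy, -⟩ := hensels_lemma hcond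
  refine ⟨y, ?_⟩
  have := hy
  rw [hF_def] at this
  simp only [map_sub, map_pow, aeval_X, aeval_C, Algebra.algebraMap_self, RingHom.id_apply, sub_eq_zero] at this
  exact this

lemma zmod_solve (hodd : p ≠ 2) (a b : ZMod p) (ha : a ≠ 0) :
    ∃ x y : ZMod p, x^2 - a*y^2 = b := by
  have hcard : Fintype.card (ZMod p) % 2 = 1 := by
    rw [ZMod.card]
    exact Nat.odd_iff.mp ((Fact.out : p.Prime).odd_of_ne_two hodd)
  obtain ⟨x, y, hxy⟩ := FiniteField.exists_root_sum_quadratic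
    (f := X^2 - C b) (g := C (-a) * X^2) (by
      rw [degree_X_pow_sub_C (by norm_num)]
      · rfl)
    (by rw [degree_C_mul_X_pow _ (neg_ne_zero.mpr ha)]; rfl) hcard
  refine ⟨x, y, ?_⟩
  simp only [eval_sub, eval_pow, eval_X, eval_C, eval_mul, eval_neg] at hxy
  linear_combination hxy

lemma znta (hodd : p ≠ 2) (a b : ℤ_[p]) (ha : ‖a‖ = 1) (hb : ‖b‖ = 1) :
    ∃ α β : ℤ_[p], α^2 - a*β^2 = b := by
  have ha' : PadicInt.toZMod a ≠ 0 := (norm_one_iff_toZMod_ne a).mp ha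
  have hb' : PadicInt.toZMod b ≠ 0 := (norm_one_iff_toZMod_ne b).mp hb
  obtain ⟨x, y, hxy⟩ := zmod_solve hodd (PadicInt.toZMod a) (PadicInt.toZMod b) ha'
  by_cases hx : x = 0
  · subst hx
    have hy : y ≠ 0 := by
      intro h; rw [h] at hxy; simp at hxy; exact hb' hxy.symm
    obtain ⟨v, hv⟩ := PadicInt.isUnit_iff.mpr ha
    set d : ℤ_[p] := -b * ↑v⁻¹ with hd_def
    have hvv : PadicInt.toZMod (↑v : ℤ_[p]) * PadicInt.toZMod ((↑v⁻¹ : ℤ_[p])) = 1 := by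
      rw [← map_mul]; simp
    have hd : PadicInt.toZMod d = y^2 := by
      have h2 : -(PadicInt.toZMod a) * y^2 = PadicInt.toZMod b := by
        linear_combination hxy
      have hAV : PadicInt.toZMod a = PadicInt.toZMod (↑v : ℤ_[p]) := by rw [hv]
      rw [hd_def, map_mul, map_neg, ← h2, hAV]
      linear_combination y^2 * hvv
    have hdn : ‖d‖ = 1 := by
      rw [norm_one_iff_toZMod_ne, hd]
      exact pow_ne_zero 2 hy
    obtain ⟨β, hβ⟩ := zsq hodd d hdn y hd
    refine ⟨0, β, ?_⟩
    rw [hβ, hd_def]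
    linear_combination b * v.mul_inv - b * (↑v⁻¹ : ℤ_[p]) * hv
  · set η : ℤ_[p] := ((y.val : ℕ) : ℤ_[p]) with hη_def
    have hη : PadicInt.toZMod η = y := by
      rw [hη_def, map_natCast, ZMod.natCast_val, ZMod.cast_id]
    set c : ℤ_[p] := b + a * η^2 with hc_def
    have hc : PadicInt.toZMod c = x^2 := by
      rw [hc_def, map_add, map_mul, map_pow, hη]
      linear_combination -hxy
    have hcn : ‖c‖ = 1 := by
      rw [norm_one_iff_toZMod_ne, hc]; exact pow_ne_zero 2 hx
    obtain ⟨α, hα⟩ := zsq hodd c hcn x hc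
    exact ⟨α, η, by rw [hα, hc_def]; ring⟩

lemma z_nonsquare_res (hodd : p ≠ 2) (z : ℤ_[p]) (hz : ‖z‖ = 1)
    (hnsq : ¬∃ y : ℤ_[p], y^2 = z) : ¬ IsSquare (PadicInt.toZMod z) := by
  rintro ⟨t, ht⟩
  exact hnsq (zsq hodd z hz t (by rw [ht]; ring))

lemma zmod_nonsq_div (hodd : p ≠ 2) (a b : ZMod p) (ha : a ≠ 0) (hb : b ≠ 0)
    (hA : ¬IsSquare a) (hB : ¬IsSquare b) : IsSquare (a * b⁻¹) := by
  have h1 : a ^ (p/2) = -1 := by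
    rcases ZMod.pow_div_two_eq_neg_one_or_one p ha with h | h
    · exact absurd ((ZMod.euler_criterion p ha).mpr h) hA
    · exact h
  have h2 : b ^ (p/2) = -1 := by
    rcases ZMod.pow_div_two_eq_neg_one_or_one p hb with h | h
    · exact absurd ((ZMod.euler_criterion p hb).mpr h) hB
    · exact h
  have hab : a * b⁻¹ ≠ 0 := mul_ne_zero ha (inv_ne_zero hb)
  refine (ZMod.euler_criterion p hab).mpr ?_
  rw [mul_pow, inv_pow, h1, h2]
  norm_num

lemma znonsq (hodd : p ≠ 2) (a b : ℤ_[p]) (ha : ‖a‖ = 1) (hb : ‖b‖ = 1)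
    (hA : ¬∃ y : ℤ_[p], y^2 = a) (hB : ¬∃ y : ℤ_[p], y^2 = b) :
    ∃ s : ℤ_[p], ‖s‖ = 1 ∧ a = b * s^2 := by
  have ha' := (norm_one_iff_toZMod_ne a).mp ha
  have hb' := (norm_one_iff_toZMod_ne b).mp hb
  obtain ⟨t, ht⟩ := zmod_nonsq_div hodd _ _ ha' hb'
    (z_nonsquare_res hodd a ha hA) (z_nonsquare_res hodd b hb hB)
  obtain ⟨v, hv⟩ := PadicInt.isUnit_iff.mpr hb
  set c : ℤ_[p] := a * ↑v⁻¹ with hc_def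
  have hvv : PadicInt.toZMod (↑v : ℤ_[p]) * PadicInt.toZMod ((↑v⁻¹ : ℤ_[p])) = 1 := by
    rw [← map_mul]; simp
  have hbv : PadicInt.toZMod ((↑v⁻¹ : ℤ_[p])) = (PadicInt.toZMod b)⁻¹ := by
    have h1 : PadicInt.toZMod b * PadicInt.toZMod ((↑v⁻¹ : ℤ_[p])) = 1 := by
      rw [← hv]; exact hvv
    exact (inv_eq_of_mul_eq_one_right h1).symm
  have hc : PadicInt.toZMod c = t^2 := by
    rw [hc_def, map_mul, hbv, ht]; ring
  have ht0 : t ≠ 0 := by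
    intro h
    rw [h, mul_zero] at ht
    exact (mul_ne_zero ha' (inv_ne_zero hb')) ht
  have hcn : ‖c‖ = 1 := by
    rw [norm_one_iff_toZMod_ne, hc]
    exact pow_ne_zero 2 ht0
  obtain ⟨s, hs⟩ := zsq hodd c hcn t hc
  have hsn : ‖s‖ = 1 := by
    rcases lt_or_eq_of_le (PadicInt.norm_le_one s) with h | h
    · exfalso
      have : ‖s^2‖ < 1 := by
        rw [pow_two, norm_mul]
        exact mul_lt_one_of_nonneg_of_lt_one_left (norm_nonneg _) h (le_of_lt h)
      rw [hs, hcn] at this; norm_num at this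
    · exact h
  refine ⟨s, hsn, ?_⟩
  rw [hs, hc_def]
  linear_combination -a * v.mul_inv + a * (↑v⁻¹ : ℤ_[p]) * hv

lemma z_sub_unit (hodd : p ≠ 2) (U T : ℤ_[p]) (hU : ‖U‖ = 1)
    (hnsq : ¬∃ y : ℤ_[p], y^2 = U) : ‖T^2 - U‖ = 1 := by
  rw [norm_one_iff_toZMod_ne]
  intro h
  apply z_nonsquare_res hodd U hU hnsq
  have h2 : PadicInt.toZMod U = (PadicInt.toZMod T)^2 := by
    rw [map_sub, map_pow, sub_eq_zero] at h
    exact h.symm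
  exact ⟨PadicInt.toZMod T, by rw [h2]; ring⟩

section QBridge

lemma qnta (hodd : p ≠ 2) (a b : ℚ_[p]) (ha : ‖a‖ = 1) (hb : ‖b‖ = 1) :
    ∃ α β : ℚ_[p], α^2 - a*β^2 = b := by
  set A : ℤ_[p] := ⟨a, ha.le⟩ with hA_def
  set B : ℤ_[p] := ⟨b, hb.le⟩ with hB_def
  have hA : ‖A‖ = 1 := by rw [← PadicInt.padic_norm_e_of_padicInt A]; exact ha
  have hB : ‖B‖ = 1 := by rw [← PadicInt.padic_norm_e_of_padicInt B]; exact hb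
  obtain ⟨α, β, h⟩ := znta hodd A B hA hB
  refine ⟨(α : ℚ_[p]), (β : ℚ_[p]), ?_⟩
  have h2 := congrArg (fun z : ℤ_[p] => (z : ℚ_[p])) h
  push_cast at h2
  exact h2

lemma qnonsq (hodd : p ≠ 2) (a b : ℚ_[p]) (ha : ‖a‖ = 1) (hb : ‖b‖ = 1)
    (hA : ¬∃ y : ℚ_[p], y^2 = a) (hB : ¬∃ y : ℚ_[p], y^2 = b) :
    ∃ s : ℚ_[p], s ≠ 0 ∧ a = b * s^2 := by
  set A : ℤ_[p] := ⟨a, ha.le⟩ with hA_def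
  set B : ℤ_[p] := ⟨b, hb.le⟩ with hB_def
  have hAn : ‖A‖ = 1 := by rw [← PadicInt.padic_norm_e_of_padicInt A]; exact ha
  have hBn : ‖B‖ = 1 := by rw [← PadicInt.padic_norm_e_of_padicInt B]; exact hb
  have hA' : ¬∃ y : ℤ_[p], y^2 = A := by
    rintro ⟨y, hy⟩
    refine hA ⟨(y : ℚ_[p]), ?_⟩
    have := congrArg (fun z : ℤ_[p] => (z : ℚ_[p])) hy
    push_cast at this
    exact this
  have hB' : ¬∃ y : ℤ_[p], y^2 = B := by
    rintro ⟨y, hy⟩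
    refine hB ⟨(y : ℚ_[p]), ?_⟩
    have := congrArg (fun z : ℤ_[p] => (z : ℚ_[p])) hy
    push_cast at this
    exact this
  obtain ⟨s, hsn, hs⟩ := znonsq hodd A B hAn hBn hA' hB'
  refine ⟨(s : ℚ_[p]), ?_, ?_⟩
  · intro h0
    rw [show (0:ℚ_[p]) = ((0 : ℤ_[p]) : ℚ_[p]) by norm_cast] at h0
    have : s = 0 := Subtype.coe_injective h0
    rw [this] at hsn; simp at hsn
  · have := congrArg (fun z : ℤ_[p] => (z : ℚ_[p])) hs
    push_cast at this
    exact this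

lemma q_sub_unit (hodd : p ≠ 2) (u t : ℚ_[p]) (hu : ‖u‖ = 1) (ht : ‖t‖ ≤ 1)
    (hnsq : ¬∃ y : ℚ_[p], y^2 = u) : ‖t^2 - u‖ = 1 := by
  set U : ℤ_[p] := ⟨u, hu.le⟩
  set T : ℤ_[p] := ⟨t, ht⟩
  have hUn : ‖U‖ = 1 := by rw [← PadicInt.padic_norm_e_of_padicInt U]; exact hu
  have hU' : ¬∃ y : ℤ_[p], y^2 = U := by
    rintro ⟨y, hy⟩
    refine hnsq ⟨(y : ℚ_[p]), ?_⟩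
    have := congrArg (fun z : ℤ_[p] => (z : ℚ_[p])) hy
    push_cast at this
    exact this
  have h := z_sub_unit hodd U T hUn hU'
  rw [← PadicInt.padic_norm_e_of_padicInt (T^2 - U)] at h
  rw [show ((T^2 - U : ℤ_[p]) : ℚ_[p]) = t^2 - u by push_cast; rfl] at h
  exact h

lemma norm_p_zpow (m : ℤ) : ‖((p:ℚ_[p])^m : ℚ_[p])‖ = (p:ℝ)^(-m) := by
  rw [norm_zpow, Padic.norm_p, ← zpow_neg_one, ← zpow_mul]
  ring_nf

lemma q_sq_norm (x : ℚ_[p]) (hx : x ≠ 0) : ‖x^2‖ = (p:ℝ)^(2*(-x.valuation)) := by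
  rw [norm_pow, Padic.norm_eq_zpow_neg_valuation hx, ← zpow_natCast ((p:ℝ)^(-x.valuation)) 2, ← zpow_mul]
  ring_nf

lemma q_norm_even (hodd : p ≠ 2) (u : ℚ_[p]) (hu : ‖u‖ = 1)
    (hunsq : ¬∃ y : ℚ_[p], y^2 = u) (x y : ℚ_[p]) (h : x ≠ 0 ∨ y ≠ 0) :
    ∃ m : ℤ, ‖x^2 - u*y^2‖ = (p:ℝ)^(2*m) := by
  have hp1 : (1:ℝ) < (p:ℝ) := by
    exact_mod_cast (Fact.out : p.Prime).one_lt
  have hp0 : (0:ℝ) < (p:ℝ) := lt_trans one_pos hp1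
  rcases eq_or_ne y 0 with hy | hy
  · subst hy
    have hx : x ≠ 0 := h.resolve_right (by simp)
    refine ⟨-x.valuation, ?_⟩
    rw [show x^2 - u*0^2 = x^2 by ring, q_sq_norm x hx]
  · set t : ℚ_[p] := x / y with ht_def
    have hty : t * y = x := div_mul_cancel₀ x hy
    have hxy : x^2 - u*y^2 = (t^2 - u) * y^2 := by
      linear_combination (-(x + t*y)) * hty
    have key2 : ∃ k : ℤ, ‖t^2 - u‖ = (p:ℝ)^(2*k) := by
      rcases lt_trichotomy ‖t‖ 1 with h1 | h1 | h1
      · refine ⟨0, ?_⟩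
        have hne : ‖t^2‖ ≠ ‖-u‖ := by
          rw [norm_neg, hu, norm_pow]
          exact ne_of_lt (by nlinarith [norm_nonneg t])
        have := Padic.add_eq_max_of_ne hne
        rw [show t^2 + -u = t^2 - u by ring] at this
        rw [this, norm_neg, hu, max_eq_right]
        · norm_num
        · rw [norm_pow]; nlinarith [norm_nonneg t]
      · exact ⟨0, by rw [q_sub_unit hodd u t hu h1.le hunsq]; norm_num⟩
      · have ht0 : t ≠ 0 := by
          intro h0; rw [h0] at h1; simp at h1; linarith
        refine ⟨-t.valuation, ?_⟩
        have hne : ‖t^2‖ ≠ ‖-u‖ := by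
          rw [norm_neg, hu, norm_pow]
          exact ne_of_gt (by nlinarith)
        have := Padic.add_eq_max_of_ne hne
        rw [show t^2 + -u = t^2 - u by ring] at this
        rw [this, norm_neg, hu, max_eq_left]
        · exact q_sq_norm t ht0
        · rw [norm_pow]; nlinarith
    obtain ⟨k, hk⟩ := key2
    refine ⟨k + (-y.valuation), ?_⟩
    rw [hxy, norm_mul, hk, q_sq_norm y hy, ← zpow_add₀ (ne_of_gt hp0)]
    ring_nf

lemma q_decomp (c : ℚ_[p]) (hc : c ≠ 0) :
    ∃ (s w : ℚ_[p]), s ≠ 0 ∧ ‖w‖ = 1 ∧ (c = w * s^2 ∨ c = (p*w) * s^2) := by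
  have hp0 : ((p:ℚ_[p])) ≠ 0 := by
    exact_mod_cast (Nat.cast_ne_zero (R := ℚ_[p])).mpr (Fact.out : p.Prime).pos.ne'
  have hpr : (0:ℝ) < (p:ℝ) := by exact_mod_cast (Fact.out : p.Prime).pos
  set v := c.valuation with hv_def
  rcases Int.even_or_odd v with ⟨m, hm⟩ | ⟨m, hm⟩
  · set s : ℚ_[p] := (p:ℚ_[p])^m with hs_def
    have hs0 : s ≠ 0 := zpow_ne_zero m hp0
    refine ⟨s, c / s^2, hs0, ?_, Or.inl (by field_simp)⟩
    rw [norm_div, norm_pow, norm_p_zpow, Padic.norm_eq_zpow_neg_valuation hc, ← hv_def,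
      ← zpow_natCast ((p:ℝ)^(-m)) 2, ← zpow_mul, ← zpow_sub₀ (ne_of_gt hpr)]
    convert zpow_zero ((p:ℝ)) using 2
    push_cast
    omega
  · set s : ℚ_[p] := (p:ℚ_[p])^m with hs_def
    have hs0 : s ≠ 0 := zpow_ne_zero m hp0
    refine ⟨s, c / (p * s^2), hs0, ?_, Or.inr (by field_simp)⟩
    rw [norm_div, norm_mul, norm_pow, norm_p_zpow, Padic.norm_p,
      Padic.norm_eq_zpow_neg_valuation hc, ← hv_def]
    rw [show ((p:ℝ))⁻¹ = (p:ℝ)^(-1:ℤ) by simp]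
    rw [← zpow_natCast ((p:ℝ)^(-m)) 2, ← zpow_mul, ← zpow_add₀ (ne_of_gt hpr),
      ← zpow_sub₀ (ne_of_gt hpr)]
    convert zpow_zero ((p:ℝ)) using 2
    push_cast
    omega

lemma q_val0_norm (x : ℚ_[p]) (hx : x ≠ 0) (hv : x.valuation = 0) : ‖x‖ = 1 := by
  rw [Padic.norm_eq_zpow_neg_valuation hx, hv]; norm_num

end QBridge

end NTLayer

section Division

variable {p : ℕ} [Fact p.Prime]

lemma aniso (hodd : p ≠ 2) (u : ℚ_[p]) (hu : ‖u‖ = 1) (hunsq : ¬∃ y : ℚ_[p], y^2 = u)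
    (w x y z : ℚ_[p]) (h : ¬(w = 0 ∧ x = 0 ∧ y = 0 ∧ z = 0)) :
    w^2 - p*x^2 - u*y^2 + p*u*z^2 ≠ 0 := by
  have hp1 : (1:ℝ) < (p:ℝ) := by exact_mod_cast (Fact.out : p.Prime).one_lt
  have hp0 : (0:ℝ) < (p:ℝ) := lt_trans one_pos hp1
  have hpq : ((p:ℚ_[p])) ≠ 0 := by
    exact_mod_cast (Nat.cast_ne_zero (R := ℚ_[p])).mpr (Fact.out : p.Prime).pos.ne'
  intro hN
  have hkey : w^2 - u*y^2 = p * (x^2 - u*z^2) := by linear_combination hN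
  by_cases h1 : w = 0 ∧ y = 0
  · obtain ⟨rfl, rfl⟩ := h1
    have h2 : ¬(x = 0 ∧ z = 0) := by
      intro ⟨hx, hz⟩; exact h ⟨rfl, hx, rfl, hz⟩
    obtain ⟨m, hm⟩ := q_norm_even hodd u hu hunsq x z (by tauto)
    have hz0 : x^2 - u*z^2 = 0 := by
      have : (p:ℚ_[p]) * (x^2 - u*z^2) = 0 := by linear_combination -hkey
      rcases mul_eq_zero.mp this with h' | h'
      · exact absurd h' hpq
      · exact h'
    rw [hz0, norm_zero] at hm
    have := zpow_pos hp0 (2*m)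
    rw [← hm] at this
    exact lt_irrefl _ this
  · have hA : w ≠ 0 ∨ y ≠ 0 := by tauto
    obtain ⟨m, hm⟩ := q_norm_even hodd u hu hunsq w y hA
    by_cases h2 : x = 0 ∧ z = 0
    · obtain ⟨rfl, rfl⟩ := h2
      have : w^2 - u*y^2 = 0 := by
        rw [hkey]; ring
      rw [this, norm_zero] at hm
      have := zpow_pos hp0 (2*m)
      rw [← hm] at this
      exact lt_irrefl _ this
    · obtain ⟨l, hl⟩ := q_norm_even hodd u hu hunsq x z (by tauto)
      rw [hkey, norm_mul, Padic.norm_p, hl] at hm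
      have heq : (p:ℝ)^(2*l - 1) = (p:ℝ)^(2*m) := by
        rw [zpow_sub₀ (ne_of_gt hp0)]
        rw [← hm]
        field_simp
      have := zpow_right_injective₀ hp0 (ne_of_gt hp1) heq
      omega

lemma no_zero_div (hodd : p ≠ 2) (u : ℚ_[p]) (hu : ‖u‖ = 1)
    (hunsq : ¬∃ y : ℚ_[p], y^2 = u) (q r : ℍ[ℚ_[p],(p:ℚ_[p]),u]) (hq : q ≠ 0)
    (hqr : q * r = 0) : r = 0 := by
  set N : ℚ_[p] := q.re^2 - p*q.imI^2 - u*q.imJ^2 + p*u*q.imK^2 with hN_def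
  have hNne : N ≠ 0 := by
    apply aniso hodd u hu hunsq
    intro ⟨h1, h2, h3, h4⟩
    apply hq
    apply QuaternionAlgebra.ext h1 h2 h3 h4
  have hconj : (⟨q.re,-q.imI,-q.imJ,-q.imK⟩ : ℍ[ℚ_[p],(p:ℚ_[p]),u]) * q
      = algebraMap ℚ_[p] _ N := by
    rw [QuaternionAlgebra.algebraMap_eq]
    have : q = (⟨q.re, q.imI, q.imJ, q.imK⟩ : ℍ[ℚ_[p],(p:ℚ_[p]),u]) := rfl
    rw [this]
    exact conj_mul _ _ _ _ _ _
  have h0 : algebraMap ℚ_[p] ℍ[ℚ_[p],(p:ℚ_[p]),u] N * r = 0 := by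
    rw [← hconj, mul_assoc, hqr, mul_zero]
  rw [Algebra.smul_def N r |>.symm] at h0
  rcases smul_eq_zero.mp h0 with h' | h'
  · exact absurd h' hNne
  · exact h'

end Division

section Classify

variable {p : ℕ} [Fact p.Prime]

lemma norm_one_ne_zero {x : ℚ_[p]} (hx : ‖x‖ = 1) : x ≠ 0 := by
  intro h; rw [h, norm_zero] at hx; norm_num at hx

lemma KU (hodd : p ≠ 2) (x y : ℚ_[p]) (hx : ‖x‖ = 1) (hy : ‖y‖ = 1) :
    Nonempty (ℍ[ℚ_[p],x,y] ≃ₐ[ℚ_[p]] ℍ[ℚ_[p],1,1]) := by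
  have hx0 := norm_one_ne_zero hx
  have hy0 := norm_one_ne_zero hy
  obtain ⟨α, β, hαβ⟩ := qnta hodd x y⁻¹ hx (by rw [norm_inv, hy]; norm_num)
  have e1 : ℍ[ℚ_[p],x,y*y⁻¹] ≃ₐ[ℚ_[p]] ℍ[ℚ_[p],x,y] :=
    normEquiv x y α β y⁻¹ hαβ (inv_ne_zero hy0)
  have e2 : ℍ[ℚ_[p],x,y] ≃ₐ[ℚ_[p]] ℍ[ℚ_[p],x,1] :=
    ((castEquiv x 1 x (y*y⁻¹) rfl (by field_simp)).trans e1).symm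
  exact ⟨e2.trans ((swapEquiv x 1).trans (oneEquiv x hx0 (by norm_num)))⟩

lemma KM (hodd : p ≠ 2) (u : ℚ_[p]) (hu : ‖u‖ = 1) (hunsq : ¬∃ y : ℚ_[p], y^2 = u)
    (x w : ℚ_[p]) (hx : ‖x‖ = 1) (hw : ‖w‖ = 1) :
    Nonempty (ℍ[ℚ_[p],x,(p:ℚ_[p])*w] ≃ₐ[ℚ_[p]] ℍ[ℚ_[p],1,1]) ∨
    Nonempty (ℍ[ℚ_[p],x,(p:ℚ_[p])*w] ≃ₐ[ℚ_[p]] ℍ[ℚ_[p],(p:ℚ_[p]),u]) := by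
  have hx0 := norm_one_ne_zero hx
  have hw0 := norm_one_ne_zero hw
  have hpq : ((p:ℚ_[p])) ≠ 0 := by
    exact_mod_cast (Nat.cast_ne_zero (R := ℚ_[p])).mpr (Fact.out : p.Prime).pos.ne'
  have hpw : (p:ℚ_[p])*w ≠ 0 := mul_ne_zero hpq hw0
  by_cases hsq : ∃ t : ℚ_[p], t^2 = x
  · left
    obtain ⟨t, ht⟩ := hsq
    have ht0 : t ≠ 0 := by
      intro h; rw [h] at ht; simp at ht; exact hx0 ht.symm
    have e1 : ℍ[ℚ_[p],x,(p:ℚ_[p])*w] ≃ₐ[ℚ_[p]] ℍ[ℚ_[p],1*t^2,(p:ℚ_[p])*w] :=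
      castEquiv _ _ _ _ (by rw [← ht]; ring) rfl
    exact ⟨e1.trans ((sqEquiv' 1 ((p:ℚ_[p])*w) t ht0).trans
      (oneEquiv ((p:ℚ_[p])*w) hpw (by norm_num)))⟩
  · right
    obtain ⟨s, hs0, hxs⟩ := qnonsq hodd x u hx hu hsq hunsq
    have e1 : ℍ[ℚ_[p],x,(p:ℚ_[p])*w] ≃ₐ[ℚ_[p]] ℍ[ℚ_[p],u*s^2,(p:ℚ_[p])*w] :=
      castEquiv _ _ _ _ hxs rfl
    obtain ⟨α, β, hαβ⟩ := qnta hodd u w hu hw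
    have e3 : ℍ[ℚ_[p],u,(p:ℚ_[p])*w] ≃ₐ[ℚ_[p]] ℍ[ℚ_[p],u,(p:ℚ_[p])] :=
      normEquiv u (p:ℚ_[p]) α β w hαβ hw0
    exact ⟨e1.trans ((sqEquiv' u ((p:ℚ_[p])*w) s hs0).trans (e3.trans (swapEquiv u (p:ℚ_[p]))))⟩

lemma classify (hodd : p ≠ 2) (u : ℚ_[p]) (hu : ‖u‖ = 1) (hunsq : ¬∃ y : ℚ_[p], y^2 = u)
    (a b : ℚ_[p]) (ha : a ≠ 0) (hb : b ≠ 0) :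
    Nonempty (ℍ[ℚ_[p], a, b] ≃ₐ[ℚ_[p]] ℍ[ℚ_[p], 1, 1]) ∨
    Nonempty (ℍ[ℚ_[p], a, b] ≃ₐ[ℚ_[p]] ℍ[ℚ_[p], (p : ℚ_[p]), u]) := by
  have hpq : ((p:ℚ_[p])) ≠ 0 := by
    exact_mod_cast (Nat.cast_ne_zero (R := ℚ_[p])).mpr (Fact.out : p.Prime).pos.ne'
  obtain ⟨s, w, hs0, hw, hca⟩ := q_decomp a ha
  obtain ⟨t, z, ht0, hz, hcb⟩ := q_decomp b hb
  have hw0 := norm_one_ne_zero hw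
  have hz0 := norm_one_ne_zero hz
  rcases hca with h | h <;> rcases hcb with h' | h'
  · -- a = w s², b = z t² : both units
    have e : ℍ[ℚ_[p],a,b] ≃ₐ[ℚ_[p]] ℍ[ℚ_[p],w,z] :=
      (castEquiv a b (w*s^2) (z*t^2) h h').trans
        ((sqEquiv' w (z*t^2) s hs0).trans (sqEquiv w z t ht0))
    exact Or.inl ((KU hodd w z hw hz).map (fun f => e.trans f))
  · -- a = w s², b = (p z) t²
    have e : ℍ[ℚ_[p],a,b] ≃ₐ[ℚ_[p]] ℍ[ℚ_[p],w,(p:ℚ_[p])*z] :=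
      (castEquiv a b (w*s^2) (((p:ℚ_[p])*z)*t^2) h h').trans
        ((sqEquiv' w (((p:ℚ_[p])*z)*t^2) s hs0).trans (sqEquiv w ((p:ℚ_[p])*z) t ht0))
    exact (KM hodd u hu hunsq w z hw hz).imp
      (Nonempty.map fun f => e.trans f) (Nonempty.map fun f => e.trans f)
  · -- a = (p w) s², b = z t²
    have e : ℍ[ℚ_[p],a,b] ≃ₐ[ℚ_[p]] ℍ[ℚ_[p],z,(p:ℚ_[p])*w] :=
      ((castEquiv a b (((p:ℚ_[p])*w)*s^2) (z*t^2) h h').trans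
        ((sqEquiv' ((p:ℚ_[p])*w) (z*t^2) s hs0).trans
          (sqEquiv ((p:ℚ_[p])*w) z t ht0))).trans (swapEquiv ((p:ℚ_[p])*w) z)
    exact (KM hodd u hu hunsq z w hz hw).imp
      (Nonempty.map fun f => e.trans f) (Nonempty.map fun f => e.trans f)
  · -- both odd
    have hpw : (p:ℚ_[p])*w ≠ 0 := mul_ne_zero hpq hw0
    have e0 : ℍ[ℚ_[p],a,b] ≃ₐ[ℚ_[p]] ℍ[ℚ_[p],(p:ℚ_[p])*w,(p:ℚ_[p])*z] :=
      (castEquiv a b (((p:ℚ_[p])*w)*s^2) (((p:ℚ_[p])*z)*t^2) h h').trans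
        ((sqEquiv' ((p:ℚ_[p])*w) ((((p:ℚ_[p])*z))*t^2) s hs0).trans
          (sqEquiv ((p:ℚ_[p])*w) ((p:ℚ_[p])*z) t ht0))
    have e5 : ℍ[ℚ_[p],(p:ℚ_[p])*w,(p:ℚ_[p])*z] ≃ₐ[ℚ_[p]]
        ℍ[ℚ_[p],(p:ℚ_[p])*w,(-((p:ℚ_[p])*z)*((p:ℚ_[p])*w)) * (-((p:ℚ_[p])*w)⁻¹)] :=
      castEquiv _ _ _ _ rfl (by field_simp)
    have e6 : ℍ[ℚ_[p],(p:ℚ_[p])*w,(-((p:ℚ_[p])*z)*((p:ℚ_[p])*w)) * (-((p:ℚ_[p])*w)⁻¹)]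
        ≃ₐ[ℚ_[p]] ℍ[ℚ_[p],(p:ℚ_[p])*w,-((p:ℚ_[p])*z)*((p:ℚ_[p])*w)] :=
      normEquiv _ _ 0 (((p:ℚ_[p])*w)⁻¹) _ (by field_simp; ring)
        (neg_ne_zero.mpr (inv_ne_zero hpw))
    have e7 : ℍ[ℚ_[p],(p:ℚ_[p])*w,-((p:ℚ_[p])*z)*((p:ℚ_[p])*w)] ≃ₐ[ℚ_[p]]
        ℍ[ℚ_[p],(p:ℚ_[p])*w,(-(z*w))*(p:ℚ_[p])^2] :=
      castEquiv _ _ _ _ rfl (by ring)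
    have e8 := sqEquiv ((p:ℚ_[p])*w) (-(z*w)) (p:ℚ_[p]) hpq
    have e9 := swapEquiv ((p:ℚ_[p])*w) (-(z*w))
    have e : ℍ[ℚ_[p],a,b] ≃ₐ[ℚ_[p]] ℍ[ℚ_[p],-(z*w),(p:ℚ_[p])*w] :=
      e0.trans (e5.trans (e6.trans (e7.trans (e8.trans e9))))
    have hzw : ‖-(z*w)‖ = 1 := by rw [norm_neg, norm_mul, hz, hw]; norm_num
    exact (KM hodd u hu hunsq (-(z*w)) w hzw hw).imp
      (Nonempty.map fun f => e.trans f) (Nonempty.map fun f => e.trans f)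

lemma noniso (hodd : p ≠ 2) (u : ℚ_[p]) (hu : ‖u‖ = 1) (hunsq : ¬∃ y : ℚ_[p], y^2 = u) :
    ¬ Nonempty (ℍ[ℚ_[p], 1, 1] ≃ₐ[ℚ_[p]] ℍ[ℚ_[p], (p : ℚ_[p]), u]) := by
  rintro ⟨e⟩
  set X : ℍ[ℚ_[p],(1:ℚ_[p]),1] := ⟨1,1,0,0⟩ with hX
  set Y : ℍ[ℚ_[p],(1:ℚ_[p]),1] := ⟨1,-1,0,0⟩ with hY
  have hXY : X * Y = 0 := by
    rw [hX, hY]; ext <;> simp [QuaternionAlgebra.mk_mul_mk]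
  have hX0 : X ≠ 0 := by
    rw [hX]; intro hc
    have := congrArg QuaternionAlgebra.re hc
    simp at this
  have hY0 : Y ≠ 0 := by
    rw [hY]; intro hc
    have := congrArg QuaternionAlgebra.re hc
    simp at this
  have h1 : e X * e Y = 0 := by rw [← map_mul, hXY, map_zero]
  have h2 : e X ≠ 0 := fun hc => hX0 (by
    have := congrArg e.symm hc
    simpa using this)
  have h3 : e Y = 0 := no_zero_div hodd u hu hunsq (e X) (e Y) h2 h1
  exact hY0 (by
    have := congrArg e.symm h3
    simpa using this)

end Classify
end PadicQuatAux

/-- for `p` an odd prime and `u` a non-square unit of `ℚ_p`, every quaternion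
algebra over `ℚ_p` is isomorphic either to the split algebra `ℍ[ℚ_p, 1, 1]` or to the
division algebra `ℍ[ℚ_p, p, u]`, and these two are not isomorphic: there are exactly two
isomorphism classes of quaternion algebras over `ℚ_p`. -/
theorem padic_quaternionAlgebra_two_classes (p : ℕ) [Fact p.Prime] (hodd : p ≠ 2)
    (u : ℚ_[p]) (hu0 : u ≠ 0) (huval : u.valuation = 0) (hunsq : ¬ ∃ y : ℚ_[p], y ^ 2 = u) :
    (∀ a b : ℚ_[p], a ≠ 0 → b ≠ 0 →
      Nonempty (ℍ[ℚ_[p], a, b] ≃ₐ[ℚ_[p]] ℍ[ℚ_[p], 1, 1]) ∨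
      Nonempty (ℍ[ℚ_[p], a, b] ≃ₐ[ℚ_[p]] ℍ[ℚ_[p], (p : ℚ_[p]), u])) ∧
    ¬ Nonempty (ℍ[ℚ_[p], 1, 1] ≃ₐ[ℚ_[p]] ℍ[ℚ_[p], (p : ℚ_[p]), u]) := by
  have hu : ‖u‖ = 1 := PadicQuatAux.q_val0_norm u hu0 huval
  constructor
  · intro a b ha hb
    exact PadicQuatAux.classify hodd u hu hunsq a b ha hb
  · exact PadicQuatAux.noniso hodd u hu hunsq
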